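/- Every weak contact semilattice satisfying (D1) can be embedded into a Boolean algebra equipped with some weak contact relation (not necessarily overlap or additive). -/

import Mathlib

universe u

open scoped symmDiff

namespace D1EmbedAux

variable {S : Type u} [SemilatticeSup S] [OrderBot S]

/-- `φ a = {x | ¬ a ≤ x}`. -/
def phi (a : S) : Set S := {x | ¬ a ≤ x}

lemma phi_mono {a b : S} (h : a ≤ b) : phi a ⊆ phi b :=
  fun _ hx hbx => hx (h.trans hbx)

lemma phi_sup (a b : S) : phi (a ⊔ b) = phi a ∪ phi b := by
  ext x; simp only [phi, Set.mem_setOf_eq, Set.mem_union, sup_le_iff, not_and_or]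

lemma phi_bot : phi (⊥ : S) = (⊥ : Set S) := by
  ext x; simp [phi]

/-- Key consequence of (D1): if `φ c \ φ a` is covered by finitely many
`φ cᵢ ∩ φ dᵢ` with `¬ δ cᵢ dᵢ`, then `c ≤ a`. -/
lemma cover_le (δ : S → S → Prop)
    (hD1 : ∀ a b c₀ c₁ : S, b ≤ a ⊔ c₀ → b ≤ a ⊔ c₁ → ¬ δ c₀ c₁ → b ≤ a)
    (l : List (S × S)) (hl : ∀ p ∈ l, ¬ δ p.1 p.2) (a c : S)
    (h : ∀ x : S, ¬ c ≤ x → a ≤ x → ∃ p ∈ l, ¬ p.1 ≤ x ∧ ¬ p.2 ≤ x) : c ≤ a := by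
  induction l generalizing a with
  | nil =>
    by_contra hca
    obtain ⟨p, hp, -⟩ := h a hca le_rfl
    simp at hp
  | cons p l ih =>
    have hl' : ∀ q ∈ l, ¬ δ q.1 q.2 := fun q hq => hl q (List.mem_cons_of_mem _ hq)
    have h1 : c ≤ a ⊔ p.1 := by
      refine ih hl' (a ⊔ p.1) (fun x hcx hax => ?_)
      obtain ⟨q, hq, hq1, hq2⟩ := h x hcx (le_sup_left.trans hax)
      rcases List.mem_cons.1 hq with rfl | hq'
      · exact absurd (le_sup_right.trans hax) hq1
      · exact ⟨q, hq', hq1, hq2⟩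
    have h2 : c ≤ a ⊔ p.2 := by
      refine ih hl' (a ⊔ p.2) (fun x hcx hax => ?_)
      obtain ⟨q, hq, hq1, hq2⟩ := h x hcx (le_sup_left.trans hax)
      rcases List.mem_cons.1 hq with rfl | hq'
      · exact absurd (le_sup_right.trans hax) hq2
      · exact ⟨q, hq', hq1, hq2⟩
    exact hD1 a c p.1 p.2 h1 h2 (hl p List.mem_cons_self)

end D1EmbedAux

open D1EmbedAux

/-- Every weak contact semilattice satisfying (D1) embeds into a Boolean
algebra equipped with some weak contact relation. -/
theorem d1_embeds_into_weak_contact_BA {S : Type u} [SemilatticeSup S] [OrderBot S]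
    (δ : S → S → Prop)
    (hSym : ∀ a b : S, δ a b → δ b a)
    (hEmp : ∀ a b : S, δ a b → ⊥ < a ∧ ⊥ < b)
    (hExt : ∀ a b a₁ b₁ : S, δ a b → a ≤ a₁ → b ≤ b₁ → δ a₁ b₁)
    (hRef : ∀ n : S, n ≠ ⊥ → δ n n)
    (hD1 : ∀ a b c₀ c₁ : S, b ≤ a ⊔ c₀ → b ≤ a ⊔ c₁ → ¬ δ c₀ c₁ → b ≤ a) :
    ∃ (B : Type u) (_ : BooleanAlgebra B) (δB : B → B → Prop) (φ : S → B),
      (∀ a b : B, δB a b → δB b a) ∧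
      (∀ a b : B, δB a b → ⊥ < a ∧ ⊥ < b) ∧
      (∀ a b a₁ b₁ : B, δB a b → a ≤ a₁ → b ≤ b₁ → δB a₁ b₁) ∧
      (∀ n : B, n ≠ ⊥ → δB n n) ∧
      Function.Injective φ ∧ φ ⊥ = ⊥ ∧
      (∀ a b : S, φ (a ⊔ b) = φ a ⊔ φ b) ∧
      (∀ a b : S, δ a b ↔ δB (φ a) (φ b)) := by
  classical
  -- The Boolean ring of subsets of `S`
  set R := AsBoolRing (Set S) with hR
  -- generators: φ c ⊓ φ d for non-contact pairs (c, d)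
  set G : Set R := {r | ∃ c d : S, ¬ δ c d ∧ r = toBoolRing (phi c ⊓ phi d)} with hG
  set I : Ideal R := Ideal.span G with hI
  letI : BooleanRing (R ⧸ I) :=
    { (inferInstance : CommRing (R ⧸ I)) with
      isIdempotentElem := fun x => by
        obtain ⟨y, rfl⟩ := Ideal.Quotient.mk_surjective x
        unfold IsIdempotentElem
        rw [← map_mul, BooleanRing.mul_self] }
  -- the quotient Boolean algebra
  set B := AsBoolAlg (R ⧸ I) with hB
  set j : Set S → B := fun x => toBoolAlg (Ideal.Quotient.mk I (toBoolRing x)) with hj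
  -- basic facts about j
  have j_inf : ∀ x y : Set S, j (x ⊓ y) = j x ⊓ j y := by
    intro x y
    show toBoolAlg _ = toBoolAlg _ ⊓ toBoolAlg _
    rw [← toBoolAlg_mul, ← map_mul, ← toBoolRing_inf]
  have j_sup : ∀ x y : Set S, j (x ⊔ y) = j x ⊔ j y := by
    intro x y
    have key : toBoolRing (x ⊔ y) =
        toBoolRing x + toBoolRing y + toBoolRing x * toBoolRing y := by
      apply ofBoolRing.injective
      rw [ofBoolRing_add, ofBoolRing_add, ofBoolRing_mul, ofBoolRing_toBoolRing]
      exact (symmDiff_symmDiff_inf (a := x) (b := y)).symm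
    show toBoolAlg _ = toBoolAlg _ ⊔ toBoolAlg _
    rw [key, map_add (Ideal.Quotient.mk I), map_add (Ideal.Quotient.mk I),
      map_mul (Ideal.Quotient.mk I), toBoolAlg_add_add_mul]
  have j_bot : j (⊥ : Set S) = ⊥ := by
    show toBoolAlg _ = ⊥
    rw [toBoolRing_bot, map_zero, toBoolAlg_zero]
  have j_bot_iff : ∀ x : Set S, j x = ⊥ ↔ toBoolRing x ∈ I := by
    intro x
    rw [show (⊥ : B) = toBoolAlg (0 : R ⧸ I) from (toBoolAlg_zero).symm, toBoolAlg_inj,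
      Ideal.Quotient.eq_zero_iff_mem]
  have jle : ∀ x y : Set S, j x ≤ j y ↔ toBoolRing (x \ y) ∈ I := by
    intro x y
    rw [← inf_eq_left]
    rw [← j_inf]
    constructor
    · intro h
      have : j ((x ⊓ y) ∆ x) = ⊥ := by
        show toBoolAlg _ = ⊥
        rw [toBoolRing_symmDiff, ← toBoolAlg_zero, toBoolAlg_inj, map_add]
        have hx : (Ideal.Quotient.mk I) (toBoolRing (x ⊓ y)) =
            (Ideal.Quotient.mk I) (toBoolRing x) := toBoolAlg_inj.mp h
        rw [hx, BooleanRing.add_self]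
      rw [j_bot_iff] at this
      rwa [show (x ⊓ y) ∆ x = x \ y by
        ext z; simp [Set.mem_symmDiff]; tauto] at this
    · intro h
      have : j ((x ⊓ y) ∆ x) = ⊥ := by
        rw [j_bot_iff]
        rwa [show (x ⊓ y) ∆ x = x \ y by
          ext z; simp [Set.mem_symmDiff]; tauto]
      show toBoolAlg _ = toBoolAlg _
      rw [toBoolAlg_inj]
      have := (j_bot_iff _).mp this
      rw [← Ideal.Quotient.eq_zero_iff_mem, toBoolRing_symmDiff, map_add,
        add_eq_zero_iff_eq_neg] at this
      exact this.trans (BooleanRing.neg_eq _)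
  -- membership in the ideal gives a finite cover by generators
  have memI_cover : ∀ r : R, r ∈ I → ∃ l : List (S × S),
      (∀ p ∈ l, ¬ δ p.1 p.2) ∧
      ∀ x : S, x ∈ ofBoolRing r → ∃ p ∈ l, x ∈ phi p.1 ∧ x ∈ phi p.2 := by
    intro r hr
    rw [hI] at hr
    induction hr using Submodule.span_induction with
    | mem r hrG =>
      obtain ⟨c, d, hcd, rfl⟩ := hrG
      refine ⟨[(c, d)], by simpa using hcd, fun x hx => ?_⟩
      rw [ofBoolRing_toBoolRing] at hx
      exact ⟨(c, d), by simp, hx.1, hx.2⟩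
    | zero =>
      refine ⟨[], by simp, fun x hx => ?_⟩
      rw [ofBoolRing_zero] at hx
      exact absurd hx (Set.notMem_empty x)
    | add u v hu hv ihu ihv =>
      obtain ⟨lu, hlu, hcu⟩ := ihu
      obtain ⟨lv, hlv, hcv⟩ := ihv
      refine ⟨lu ++ lv, ?_, fun x hx => ?_⟩
      · intro p hp
        rcases List.mem_append.1 hp with h | h
        · exact hlu p h
        · exact hlv p h
      · rw [ofBoolRing_add] at hx
        rcases Set.mem_symmDiff.mp hx with ⟨h1, -⟩ | ⟨h1, -⟩
        · obtain ⟨p, hp, hx1, hx2⟩ := hcu x h1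
          exact ⟨p, List.mem_append.2 (Or.inl hp), hx1, hx2⟩
        · obtain ⟨p, hp, hx1, hx2⟩ := hcv x h1
          exact ⟨p, List.mem_append.2 (Or.inr hp), hx1, hx2⟩
    | smul a u hu ihu =>
      obtain ⟨lu, hlu, hcu⟩ := ihu
      refine ⟨lu, hlu, fun x hx => ?_⟩
      rw [smul_eq_mul, ofBoolRing_mul] at hx
      exact hcu x hx.2
  -- the embedding
  set κ : S → B := fun a => j (phi a) with hκ
  have κ_le : ∀ c a : S, κ c ≤ κ a ↔ c ≤ a := by
    intro c a
    constructor
    · intro h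
      rw [hκ] at h
      simp only at h
      rw [jle] at h
      obtain ⟨l, hl, hcov⟩ := memI_cover _ h
      refine cover_le δ hD1 l hl a c (fun x hcx hax => ?_)
      have hx : x ∈ ofBoolRing (toBoolRing (phi c \ phi a)) := by
        rw [ofBoolRing_toBoolRing]
        exact ⟨hcx, fun h' => h' hax⟩
      obtain ⟨p, hp, h1, h2⟩ := hcov x hx
      exact ⟨p, hp, h1, h2⟩
    · intro h
      rw [hκ]
      simp only
      rw [jle]
      have : phi c \ phi a = (⊥ : Set S) := by
        rw [Set.diff_eq_empty.mpr (phi_mono h)]; rfl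
      rw [this, toBoolRing_bot]
      exact I.zero_mem
  have κ_bot : κ ⊥ = ⊥ := by rw [hκ]; simp only; rw [phi_bot]; exact j_bot
  have κ_ne_bot : ∀ a : S, a ≠ ⊥ → κ a ≠ ⊥ := by
    intro a ha hb
    refine ha (le_bot_iff.mp ?_)
    rw [← κ_le, κ_bot, hb]
  -- the contact relation on B
  set δB : B → B → Prop := fun x y =>
    x ⊓ y ≠ ⊥ ∨ ∃ a b : S, δ a b ∧ κ a ≤ x ∧ κ b ≤ y with hδB
  refine ⟨B, inferInstance, δB, κ, ?_, ?_, ?_, ?_, ?_, κ_bot, ?_, ?_⟩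
  · -- symmetry
    rintro x y (h | ⟨a, b, hab, ha, hb⟩)
    · exact Or.inl (by rwa [inf_comm])
    · exact Or.inr ⟨b, a, hSym a b hab, hb, ha⟩
  · -- non-bot
    rintro x y (h | ⟨a, b, hab, ha, hb⟩)
    · constructor
      · exact bot_lt_iff_ne_bot.mpr (fun hx => h (by rw [hx, bot_inf_eq]))
      · exact bot_lt_iff_ne_bot.mpr (fun hy => h (by rw [hy, inf_bot_eq]))
    · have ha' : κ a ≠ ⊥ := κ_ne_bot a (fun h => absurd ((hEmp a b hab).1) (by simp [h]))
      have hb' : κ b ≠ ⊥ := κ_ne_bot b (fun h => absurd ((hEmp a b hab).2) (by simp [h]))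
      constructor
      · exact bot_lt_iff_ne_bot.mpr (fun hx => ha' (le_bot_iff.mp (hx ▸ ha)))
      · exact bot_lt_iff_ne_bot.mpr (fun hy => hb' (le_bot_iff.mp (hy ▸ hb)))
  · -- extension
    rintro x y x₁ y₁ (h | ⟨a, b, hab, ha, hb⟩) hx hy
    · refine Or.inl (fun h' => h (le_bot_iff.mp ?_))
      rw [← h']
      exact inf_le_inf hx hy
    · exact Or.inr ⟨a, b, hab, ha.trans hx, hb.trans hy⟩
  · -- reflexivity
    intro n hn
    exact Or.inl (by rwa [inf_idem])
  · -- injectivity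
    intro a b hab
    exact le_antisymm ((κ_le a b).mp hab.le) ((κ_le b a).mp hab.ge)
  · -- sup-preservation
    intro a b
    rw [hκ]
    simp only
    rw [phi_sup, show phi a ∪ phi b = phi a ⊔ phi b from rfl, j_sup]
  · -- δ a b ↔ δB (κ a) (κ b)
    intro a b
    constructor
    · intro hab
      exact Or.inr ⟨a, b, hab, le_rfl, le_rfl⟩
    · rintro (h | ⟨c, d, hcd, hc, hd⟩)
      · by_contra hab
        refine h ?_
        rw [hκ]
        simp only
        rw [← j_inf, j_bot_iff]
        exact Ideal.subset_span ⟨a, b, hab, rfl⟩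
      · exact hExt c d a b hcd ((κ_le c a).mp hc) ((κ_le d b).mp hd)
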